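/- A group π is principal if and only if for all b, b' ∈ π and all finite subsets S, S' ⊆ π, the index of H_{b,S} ∩ H_{b',S'} in H_{b,S} is either 1 or infinite. -/

import Mathlib

/-- The subgroup `H_{b,S} = {(a, b a b⁻¹) : a ∈ Z(S)}` of `π × π`. -/
def Hsub {π : Type*} [Group π] (b : π) (S : Set π) : Subgroup (π × π) :=
  Subgroup.map ((MonoidHom.id π).prod (MulAut.conj b).toMonoidHom)
    (Subgroup.centralizer S)

section aux
variable {π : Type*} [Group π]

private def phi (b : π) : π →* π × π :=
  (MonoidHom.id π).prod (MulAut.conj b).toMonoidHom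

private lemma phi_inj (b : π) : Function.Injective (phi b) :=
  fun _ _ h => congrArg Prod.fst h

private lemma relindex_map_inj {G K : Type*} [Group G] [Group K] (f : G →* K)
    (hf : Function.Injective f) (A B : Subgroup G) :
    (A.map f).relIndex (B.map f) = A.relIndex B := by
  rw [← Subgroup.relIndex_comap, Subgroup.comap_map_eq_self_of_injective hf]

private lemma centralizer_inter (S T : Set π) :
    Subgroup.centralizer (S ∪ T) = Subgroup.centralizer S ⊓ Subgroup.centralizer T := by
  ext x
  simp [Subgroup.mem_centralizer_iff, or_imp, forall_and]

private lemma Hsub_inf (b b' : π) (S S' : Set π) :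
    Hsub b S ⊓ Hsub b' S' =
      (Subgroup.centralizer S ⊓ Subgroup.centralizer (S' ∪ {b'⁻¹ * b})).map (phi b) := by
  ext ⟨x, y⟩
  simp only [Subgroup.mem_inf, Hsub, Subgroup.mem_map, phi, MonoidHom.prod_apply,
    MonoidHom.id_apply, MulEquiv.coe_toMonoidHom, MulAut.conj_apply, Prod.mk.injEq,
    centralizer_inter]
  constructor
  · rintro ⟨⟨a, ha, rfl, rfl⟩, ⟨a', ha', rfl, h2⟩⟩
    refine ⟨a', ⟨ha, ha', ?_⟩, rfl, rfl⟩
    rw [Subgroup.mem_centralizer_iff]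
    rintro c rfl
    have : b' * a' * b'⁻¹ = b * a' * b⁻¹ := h2
    calc b'⁻¹ * b * a' = b'⁻¹ * (b * a' * b⁻¹) * b := by group
      _ = b'⁻¹ * (b' * a' * b'⁻¹) * b := by rw [this]
      _ = a' * (b'⁻¹ * b) := by group
  · rintro ⟨a, ⟨ha, ha', hc⟩, rfl, rfl⟩
    refine ⟨⟨a, ha, rfl, rfl⟩, a, ha', rfl, ?_⟩
    have hc' : (b'⁻¹ * b) * a = a * (b'⁻¹ * b) :=
      Subgroup.mem_centralizer_iff.mp hc _ rfl
    calc b' * a * b'⁻¹ = b' * (a * (b'⁻¹ * b)) * b⁻¹ := by group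
      _ = b' * (b'⁻¹ * b * a) * b⁻¹ := by rw [hc']
      _ = b * a * b⁻¹ := by group

private lemma Hsub_relindex (b b' : π) (S S' : Set π) :
    (Hsub b S ⊓ Hsub b' S').relIndex (Hsub b S) =
      (Subgroup.centralizer S ⊓ Subgroup.centralizer (S' ∪ {b'⁻¹ * b})).relIndex
        (Subgroup.centralizer S) := by
  rw [Hsub_inf, Hsub, ← relindex_map_inj (phi b) (phi_inj b)]
  rfl

end aux

/-- A group `π` is principal (for all finite `S, S' ⊆ π` the index of
`Z(S) ∩ Z(S')` in `Z(S)` is `1` or infinite) if and only if for all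
`b, b' ∈ π` and all finite `S, S' ⊆ π`, the index of `H_{b,S} ∩ H_{b',S'}` in
`H_{b,S}` is `1` or infinite (infinite index is encoded by relative index
`0`). -/
theorem stmt18 {π : Type*} [Group π] :
    (∀ S S' : Finset π,
      (Subgroup.centralizer (S : Set π) ⊓ Subgroup.centralizer (S' : Set π)).relIndex
          (Subgroup.centralizer (S : Set π)) = 1 ∨
      (Subgroup.centralizer (S : Set π) ⊓ Subgroup.centralizer (S' : Set π)).relIndex
          (Subgroup.centralizer (S : Set π)) = 0) ↔
    (∀ (b b' : π) (S S' : Finset π),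
      (Hsub b (S : Set π) ⊓ Hsub b' (S' : Set π)).relIndex (Hsub b (S : Set π)) = 1 ∨
      (Hsub b (S : Set π) ⊓ Hsub b' (S' : Set π)).relIndex (Hsub b (S : Set π)) = 0) := by
  constructor
  · intro h b b' S S'
    classical
    rw [Hsub_relindex]
    have hT : ((S' : Set π) ∪ {b'⁻¹ * b}) = ((insert (b'⁻¹ * b) S' : Finset π) : Set π) := by
      rw [Finset.coe_insert, Set.insert_eq, Set.union_comm]
    rw [hT]
    exact h S (insert (b'⁻¹ * b) S')
  · intro h S S'
    have := h 1 1 S S'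
    rw [Hsub_relindex] at this
    have h1 : Subgroup.centralizer ((S' : Set π) ∪ {(1 : π)⁻¹ * 1}) =
        Subgroup.centralizer (S' : Set π) := by
      rw [centralizer_inter]
      have : Subgroup.centralizer ({(1:π)⁻¹ * 1} : Set π) = ⊤ := by
        ext x; simp [Subgroup.mem_centralizer_iff]
      rw [this, inf_top_eq]
    rwa [h1] at this
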